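/- Fix k = (k₀,k₁) ∈ ℂ², κ = (κ₀',κ₁') ∈ ℂ², and a holomorphic (complex-differentiable) function φ : ℂ² × ℂ² × ℂ → ℂ. Define Φ on ℂ^{2×2} × ℂ² × ℂ² (with arguments x = (x^{AA'}), π = (π⁰,π¹), σ = (σ₀,σ₁)) by Φ(x,π,σ) = exp( i Σ_{A,A'} k_A κ_{A'} x^{AA'} ) · φ( (i Σ_{A'} x^{0A'}σ_{A'}, i Σ_{A'} x^{1A'}σ_{A'}), σ, Σ_A k_A π^A ). Then Φ satisfies the higher spin equation M'Φ = 0, i.e. Σ_{A,B,A',B'∈{0,1}} ε^{A'B'} σ_{B'} ε^{AB} ∂²Φ/(∂π^B ∂x^{AA'}) = 0 identically. (Paper: the forward direction of Theorem 5.10, at the level of the integrand of formula (5.15): every Φ(X) = ∫ e^{ik_ax^a} φ(Z^α, k_Bπ^B) Ω solves M'Φ = 0.) -/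

import Mathlib

/-!
The forward direction of Theorem 5.10 at the level of the integrand of the
Fourier–twistor formula (5.15): for any holomorphic `φ` and fixed spinors
`k, κ`, the field
`Φ(x,π,σ) = e^{i Σ k_A κ_{A'} x^{AA'}} φ((i Σ x^{0A'}σ_{A'}, i Σ x^{1A'}σ_{A'}), σ, Σ k_A π^A)`
satisfies the higher spin equation `M'Φ = 0`.
-/

/-- Fields on complexified space-time with two spinor arguments. -/
abbrev TwField : Type :=
  (Fin 2 → Fin 2 → ℂ) → (Fin 2 → ℂ) → (Fin 2 → ℂ) → ℂ

/-- Complex partial derivative with respect to `x^{AA'}`. -/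
noncomputable def dX (A A' : Fin 2) (Φ : TwField) : TwField :=
  fun x π σ =>
    deriv (fun s : ℂ => Φ (Function.update x A (Function.update (x A) A' s)) π σ) (x A A')

/-- Complex partial derivative with respect to `π^B`. -/
noncomputable def dPi (B : Fin 2) (Φ : TwField) : TwField :=
  fun x π σ => deriv (fun s : ℂ => Φ x (Function.update π B s) σ) (π B)

/-- The antisymmetric ε-symbol on `{0,1}`: `ε^{01} = 1 = −ε^{10}`. -/
def eps (A B : Fin 2) : ℂ :=
  if A = 0 ∧ B = 1 then 1 else if A = 1 ∧ B = 0 then -1 else 0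

/-- The field defined by the integrand of the Fourier–twistor representation:
`Φ(x,π,σ) = exp(i Σ_{A,A'} k_A κ_{A'} x^{AA'}) ·
φ((i Σ_{A'} x^{0A'}σ_{A'}, i Σ_{A'} x^{1A'}σ_{A'}), σ, Σ_A k_A π^A)`. -/
noncomputable def Phi (k κ : Fin 2 → ℂ)
    (φ : (Fin 2 → ℂ) × (Fin 2 → ℂ) × ℂ → ℂ) : TwField :=
  fun x π σ =>
    Complex.exp (Complex.I * ∑ A : Fin 2, ∑ A' : Fin 2, k A * κ A' * x A A') *
      φ ((fun A : Fin 2 => Complex.I * ∑ A' : Fin 2, x A A' * σ A'), σ,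
        ∑ A : Fin 2, k A * π A)


section Aux

open Complex Metric Filter Topology

abbrev Vsp : Type := (Fin 2 → ℂ) × (Fin 2 → ℂ) × ℂ

lemma sum2_update (k κ : Fin 2 → ℂ) (x : Fin 2 → Fin 2 → ℂ) (A A' : Fin 2) (s : ℂ) :
    ∑ B : Fin 2, ∑ B' : Fin 2, k B * κ B' *
        (Function.update x A (Function.update (x A) A' s)) B B'
      = (∑ B : Fin 2, ∑ B' : Fin 2, k B * κ B' * x B B') + k A * κ A' * (s - x A A') := by
  fin_cases A <;> fin_cases A' <;>
    simp [Fin.sum_univ_two, Function.update_apply] <;> ring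

lemma sumk_update (k π : Fin 2 → ℂ) (B : Fin 2) (s : ℂ) :
    ∑ A : Fin 2, k A * Function.update π B s A
      = (∑ A : Fin 2, k A * π A) + k B * (s - π B) := by
  fin_cases B <;> simp [Fin.sum_univ_two, Function.update_apply] <;> ring

lemma Z_update (x : Fin 2 → Fin 2 → ℂ) (σ : Fin 2 → ℂ) (A A' B : Fin 2) (s : ℂ) :
    Complex.I * ∑ B' : Fin 2, (Function.update x A (Function.update (x A) A' s)) B B' * σ B'
      = (Complex.I * ∑ B' : Fin 2, x B B' * σ B')
        + (Complex.I * σ A' * (s - x A A')) * (Pi.single A 1 : Fin 2 → ℂ) B := by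
  fin_cases A <;> fin_cases A' <;> fin_cases B <;>
    simp [Fin.sum_univ_two, Function.update_apply, Pi.single_apply] <;> ring

lemma hartogs_slice {h : ℂ × ℂ → ℂ} (hd : Differentiable ℂ h) :
    Differentiable ℂ (fun t => deriv (fun r => h (t, r)) 0) := by
  intro t₀
  obtain ⟨M, hM⟩ : ∃ M, ∀ t ∈ Metric.closedBall t₀ 1, ∀ z ∈ Metric.sphere (0:ℂ) 2,
      ‖h (t, z)‖ ≤ M := by
    obtain ⟨M, hM⟩ := ((isCompact_closedBall t₀ 1).prod
      (isCompact_sphere (0:ℂ) 2)).exists_bound_of_continuousOn hd.continuous.continuousOn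
    exact ⟨M, fun t ht z hz => hM (t, z) ⟨ht, hz⟩⟩
  have hslice : ∀ t : ℂ, Differentiable ℂ (fun r => h (t, r)) := fun t =>
    hd.comp ((differentiable_const t).prodMk differentiable_id)
  have hsliceT : ∀ r : ℂ, Differentiable ℂ (fun t => h (t, r)) := fun r =>
    hd.comp (differentiable_id.prodMk (differentiable_const r))
  have cauchy : ∀ t : ℂ, ∀ w ∈ Metric.ball (0:ℂ) 2,
      (∮ z in C(0, 2), (z - w)⁻¹ • h (t, z)) = (2 * Real.pi * Complex.I : ℂ) • h (t, w) :=
    fun t w hw => ((hslice t).differentiableOn).circleIntegral_sub_inv_smul hw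
  have hzfacts : ∀ z ∈ Metric.sphere (0:ℂ) 2, ∀ r : ℂ, ‖r‖ < 2 → z ≠ 0 ∧ z - r ≠ 0 := by
    intro z hz r hr
    have hz2 : ‖z‖ = 2 := mem_sphere_zero_iff_norm.mp hz
    have h1 : (0:ℝ) < ‖z - r‖ := by
      have := norm_sub_norm_le z r
      linarith
    refine ⟨by intro hz0; rw [hz0] at hz2; simp at hz2, ?_⟩
    intro hzr
    rw [hzr] at h1; simp at h1
  have hint : ∀ (t r : ℂ), ‖r‖ < 2 → CircleIntegrable (fun z => (z - r)⁻¹ • h (t, z)) 0 2 := by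
    intro t r hr
    apply ContinuousOn.circleIntegrable (by norm_num)
    apply ContinuousOn.fun_smul
    · apply ContinuousOn.inv₀ ((continuous_id.sub continuous_const).continuousOn)
      exact fun z hz => (hzfacts z hz r hr).2
    · exact ((hslice t).continuous.comp continuous_id).continuousOn
  have jint : ∀ (t r : ℂ), ‖r‖ < 2 →
      CircleIntegrable (fun z => ((z - r)⁻¹ * z⁻¹) • h (t, z)) 0 2 := by
    intro t r hr
    apply ContinuousOn.circleIntegrable (by norm_num)
    apply ContinuousOn.fun_smul
    · apply ContinuousOn.fun_mul
      · apply ContinuousOn.inv₀ ((continuous_id.sub continuous_const).continuousOn)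
        exact fun z hz => (hzfacts z hz r hr).2
      · apply ContinuousOn.inv₀ continuous_id.continuousOn
        exact fun z hz => (hzfacts z hz 0 (by norm_num)).1
    · exact ((hslice t).continuous.comp continuous_id).continuousOn
  set J : ℂ → ℂ → ℂ := fun r t =>
    (2 * Real.pi * Complex.I : ℂ)⁻¹ • ∮ z in C(0, 2), ((z - r)⁻¹ * z⁻¹) • h (t, z) with hJdef
  have h2pi : (2 * Real.pi * Complex.I : ℂ) ≠ 0 := by
    simp [Real.pi_ne_zero, Complex.I_ne_zero, Complex.ofReal_ne_zero]
  have hJslope : ∀ t r : ℂ, r ≠ 0 → ‖r‖ < 2 → J r t = r⁻¹ * (h (t, r) - h (t, 0)) := by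
    intro t r hr0 hr2
    have e1 : Set.EqOn (fun z => ((z - r)⁻¹ * z⁻¹) • h (t, z))
        (fun z => r⁻¹ • ((z - r)⁻¹ • h (t, z) - z⁻¹ • h (t, z))) (Metric.sphere (0:ℂ) 2) := by
      intro z hz
      obtain ⟨hz0, hzr⟩ := hzfacts z hz r hr2
      simp only [smul_eq_mul]
      field_simp
      ring
    have hint0 : CircleIntegrable (fun z => z⁻¹ • h (t, z)) 0 2 := by
      simpa using hint t 0 (by norm_num)
    have c1 := cauchy t r (mem_ball_zero_iff.mpr hr2)
    have c0 := cauchy t 0 (mem_ball_zero_iff.mpr (by norm_num))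
    simp only [sub_zero] at c0
    rw [hJdef]
    simp only []
    rw [circleIntegral.integral_congr (by norm_num) e1, circleIntegral.integral_smul,
      circleIntegral.integral_sub (hint t r hr2) hint0, c1, c0]
    simp only [smul_eq_mul]
    field_simp
  have hnorm2pi : ‖(2 * Real.pi * Complex.I : ℂ)⁻¹‖ = (2 * Real.pi)⁻¹ := by
    rw [norm_inv]
    simp [norm_mul, Complex.norm_I, Complex.norm_two, Complex.norm_real, Real.norm_eq_abs,
      _root_.abs_of_nonneg Real.pi_pos.le]
  have hbound : ∀ r : ℂ, ‖r‖ ≤ 1 → ∀ t ∈ Metric.closedBall t₀ 1,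
      ‖J r t - J 0 t‖ ≤ M * ‖r‖ := by
    intro r hr t ht
    have hr2 : ‖r‖ < 2 := lt_of_le_of_lt hr (by norm_num)
    have hM0 : 0 ≤ M := le_trans (norm_nonneg _)
      (hM t ht 2 (by simp [mem_sphere_zero_iff_norm]))
    have hintr := jint t r hr2
    have hint0 := jint t 0 (by norm_num)
    rw [hJdef]
    simp only []
    rw [← smul_sub, ← circleIntegral.integral_sub hintr hint0]
    have hbnd : ‖∮ z in C(0, 2), (((z - r)⁻¹ * z⁻¹) • h (t, z)
        - ((z - 0)⁻¹ * z⁻¹) • h (t, z))‖ ≤ 2 * Real.pi * 2 * (M * ‖r‖ / 4) := by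
      apply circleIntegral.norm_integral_le_of_norm_le_const (by norm_num)
      intro z hz
      obtain ⟨hz0, hzr⟩ := hzfacts z hz r hr2
      have hz2 : ‖z‖ = 2 := mem_sphere_zero_iff_norm.mp hz
      have hnzr : (1:ℝ) ≤ ‖z - r‖ := by
        have := norm_sub_norm_le z r
        linarith
      have key : ((z - r)⁻¹ * z⁻¹) - ((z - 0)⁻¹ * z⁻¹) = r * ((z - r)⁻¹ * (z⁻¹ * z⁻¹)) := by
        rw [sub_zero]
        field_simp
        ring
      rw [← sub_smul, key]
      have hnz : ‖z⁻¹‖ = 1/2 := by rw [norm_inv, hz2]; norm_num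
      have hnzr' : ‖(z - r)⁻¹‖ ≤ 1 := by
        rw [norm_inv]
        exact inv_le_one_of_one_le₀ hnzr
      calc ‖(r * ((z - r)⁻¹ * (z⁻¹ * z⁻¹))) • h (t, z)‖
          = ‖r‖ * (‖(z - r)⁻¹‖ * (‖z⁻¹‖ * ‖z⁻¹‖)) * ‖h (t, z)‖ := by
            rw [norm_smul]; simp [norm_mul]
        _ ≤ ‖r‖ * (1 * (1/2 * (1/2))) * M := by
            apply mul_le_mul
            · apply mul_le_mul_of_nonneg_left _ (norm_nonneg r)
              rw [hnz]
              apply mul_le_mul hnzr' le_rfl (by positivity) (by norm_num)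
            · exact hM t ht z hz
            · exact norm_nonneg _
            · positivity
        _ = M * ‖r‖ / 4 := by ring
    calc ‖(2 * Real.pi * Complex.I : ℂ)⁻¹ • ∮ z in C(0, 2), (((z - r)⁻¹ * z⁻¹) • h (t, z)
          - ((z - 0)⁻¹ * z⁻¹) • h (t, z))‖
        = (2 * Real.pi)⁻¹ * ‖∮ z in C(0, 2), (((z - r)⁻¹ * z⁻¹) • h (t, z)
          - ((z - 0)⁻¹ * z⁻¹) • h (t, z))‖ := by rw [norm_smul, hnorm2pi]
      _ ≤ (2 * Real.pi)⁻¹ * (2 * Real.pi * 2 * (M * ‖r‖ / 4)) := by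
          apply mul_le_mul_of_nonneg_left hbnd (by positivity)
      _ ≤ M * ‖r‖ := by
          have hpi : (0:ℝ) < 2 * Real.pi := by positivity
          rw [inv_mul_eq_div]
          rw [div_le_iff₀ hpi]
          have hM0 : 0 ≤ M * ‖r‖ := by positivity
          nlinarith [Real.pi_pos]
  have hJ0 : ∀ t ∈ Metric.closedBall t₀ 1, J 0 t = deriv (fun r => h (t, r)) 0 := by
    intro t ht
    have hsmall : ∀ᶠ r : ℂ in 𝓝[≠] (0:ℂ), ‖r‖ < 1 := by
      apply eventually_nhdsWithin_of_eventually_nhds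
      have : Metric.ball (0:ℂ) 1 ∈ 𝓝 (0:ℂ) := Metric.ball_mem_nhds 0 one_pos
      filter_upwards [this] with r hr
      simpa [mem_ball_zero_iff] using hr
    have h1 : Tendsto (fun r => J r t) (𝓝[≠] (0:ℂ)) (𝓝 (J 0 t)) := by
      have hz : Tendsto (fun r : ℂ => J r t - J 0 t) (𝓝[≠] (0:ℂ)) (𝓝 0) := by
        apply squeeze_zero_norm' (a := fun r : ℂ => M * ‖r‖)
        · filter_upwards [hsmall] with r hr
          exact hbound r hr.le t ht
        · have : Tendsto (fun r : ℂ => M * ‖r‖) (𝓝 (0:ℂ)) (𝓝 (M * ‖(0:ℂ)‖)) := by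
            exact (continuous_const.mul continuous_norm).tendsto 0
          simpa using this.mono_left nhdsWithin_le_nhds
      have := hz.add (tendsto_const_nhds (x := J 0 t))
      simpa using this
    have h2 : Tendsto (fun r => J r t) (𝓝[≠] (0:ℂ)) (𝓝 (deriv (fun r => h (t, r)) 0)) := by
      have hder : HasDerivAt (fun r => h (t, r)) (deriv (fun r => h (t, r)) 0) 0 :=
        ((hslice t) 0).hasDerivAt
      have hsl := hasDerivAt_iff_tendsto_slope.mp hder
      apply hsl.congr'
      filter_upwards [self_mem_nhdsWithin, hsmall] with r hr0 hr1
      have hr0' : r ≠ 0 := hr0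
      rw [hJslope t r hr0' (lt_trans hr1 (by norm_num))]
      simp [slope_def_field, div_eq_inv_mul]
    exact tendsto_nhds_unique h1 h2
  have huc : TendstoUniformlyOn (fun (r : ℂ) (t : ℂ) => r⁻¹ * (h (t, r) - h (t, 0)))
      (fun t => deriv (fun r => h (t, r)) 0) (𝓝[≠] (0:ℂ)) (Metric.ball t₀ 1) := by
    rw [Metric.tendstoUniformlyOn_iff]
    intro ε hε
    have hM0 : 0 ≤ M := le_trans (norm_nonneg _)
      (hM t₀ (Metric.mem_closedBall_self zero_le_one) 2 (by simp [mem_sphere_zero_iff_norm]))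
    have hsmall : ∀ᶠ r : ℂ in 𝓝[≠] (0:ℂ), ‖r‖ < min 1 (ε / (M + 1)) := by
      apply eventually_nhdsWithin_of_eventually_nhds
      have hpos : 0 < min 1 (ε / (M + 1)) := by
        apply lt_min one_pos
        positivity
      filter_upwards [Metric.ball_mem_nhds (0:ℂ) hpos] with r hr
      simpa [mem_ball_zero_iff] using hr
    filter_upwards [self_mem_nhdsWithin, hsmall] with r hr0 hr1 t ht
    have hr0' : (r : ℂ) ≠ 0 := hr0
    have hrlt1 : ‖r‖ < 1 := lt_of_lt_of_le hr1 (min_le_left _ _)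
    have ht' : t ∈ Metric.closedBall t₀ 1 := Metric.ball_subset_closedBall ht
    rw [dist_eq_norm, ← hJ0 t ht', ← hJslope t r hr0' (lt_trans hrlt1 (by norm_num)),
      norm_sub_rev]
    calc ‖J r t - J 0 t‖ ≤ M * ‖r‖ := hbound r hrlt1.le t ht'
      _ < ε := by
        have h2 : ‖r‖ < ε / (M + 1) := lt_of_lt_of_le hr1 (min_le_right _ _)
        have h3 : M * ‖r‖ < (M + 1) * (ε / (M + 1)) := by
          apply mul_lt_mul' (by linarith) h2 (norm_nonneg r) (by linarith)
        calc M * ‖r‖ < (M + 1) * (ε / (M + 1)) := h3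
          _ = ε := by field_simp
  have hdiff : DifferentiableOn ℂ (fun t => deriv (fun r => h (t, r)) 0) (Metric.ball t₀ 1) := by
    apply huc.tendstoLocallyUniformlyOn.differentiableOn _ Metric.isOpen_ball
    filter_upwards [self_mem_nhdsWithin] with r _
    intro t _
    apply DifferentiableAt.differentiableWithinAt
    exact (((hsliceT r).sub (hsliceT 0)).const_mul r⁻¹) t
  exact hdiff.differentiableAt (Metric.isOpen_ball.mem_nhds (by simp))

lemma fderiv_line_differentiable {V : Type*} [NormedAddCommGroup V] [NormedSpace ℂ V]
    (φ : V → ℂ) (hφ : Differentiable ℂ φ) (p v w : V) :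
    Differentiable ℂ (fun t : ℂ => fderiv ℂ φ (p + t • v) w) := by
  have hjoint : Differentiable ℂ (fun q : ℂ × ℂ => φ (p + q.1 • v + q.2 • w)) := by
    apply hφ.comp
    apply Differentiable.add
    · exact (differentiable_const p).add (differentiable_fst.smul_const v)
    · exact differentiable_snd.smul_const w
  have key : ∀ t : ℂ, fderiv ℂ φ (p + t • v) w = deriv (fun r : ℂ => φ (p + t • v + r • w)) 0 := by
    intro t
    have hγ : HasDerivAt (fun r : ℂ => p + t • v + r • w) w 0 := by
      simpa using ((hasDerivAt_id (0:ℂ)).smul_const w).const_add (p + t • v)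
    have h0 : p + t • v + (0:ℂ) • w = p + t • v := by simp
    have hF : HasFDerivAt φ (fderiv ℂ φ (p + t • v)) (p + t • v + (0:ℂ) • w) := by
      rw [h0]; exact (hφ _).hasFDerivAt
    have hcomp := hF.comp_hasDerivAt 0 hγ
    exact hcomp.deriv.symm
  have hrw : (fun t : ℂ => fderiv ℂ φ (p + t • v) w)
      = fun t => deriv (fun r => (fun q : ℂ × ℂ => φ (p + q.1 • v + q.2 • w)) (t, r)) 0 := by
    funext t; exact key t
  rw [hrw]
  exact hartogs_slice hjoint

noncomputable def Ppt (k : Fin 2 → ℂ) (x : Fin 2 → Fin 2 → ℂ) (π σ : Fin 2 → ℂ) : Vsp :=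
  ((fun A : Fin 2 => Complex.I * ∑ A' : Fin 2, x A A' * σ A'), σ, ∑ A : Fin 2, k A * π A)

def Wdir (A : Fin 2) : Vsp := (Pi.single A 1, 0, 0)

def e3 : Vsp := (0, 0, 1)

lemma dX_Phi (k κ : Fin 2 → ℂ) (φ : Vsp → ℂ) (hφ : Differentiable ℂ φ)
    (A A' : Fin 2) (x : Fin 2 → Fin 2 → ℂ) (π σ : Fin 2 → ℂ) :
    dX A A' (Phi k κ φ) x π σ =
      Complex.exp (Complex.I * ∑ B : Fin 2, ∑ B' : Fin 2, k B * κ B' * x B B') *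
        (Complex.I * k A * κ A' * φ (Ppt k x π σ)
          + Complex.I * σ A' * fderiv ℂ φ (Ppt k x π σ) (Wdir A)) := by
  have hfun : (fun s : ℂ => Phi k κ φ (Function.update x A (Function.update (x A) A' s)) π σ)
      = fun s => Complex.exp ((Complex.I * ∑ B : Fin 2, ∑ B' : Fin 2, k B * κ B' * x B B')
            + Complex.I * k A * κ A' * (s - x A A')) *
          φ (Ppt k x π σ + (Complex.I * σ A' * (s - x A A')) • Wdir A) := by
    funext s
    unfold Phi
    congr 1
    · rw [sum2_update]; congr 1; ring
    · congr 1
      unfold Ppt Wdir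
      refine Prod.ext ?_ (Prod.ext ?_ ?_)
      · funext B
        show Complex.I * ∑ B' : Fin 2,
            (Function.update x A (Function.update (x A) A' s)) B B' * σ B' = _
        rw [Z_update x σ A A' B s]
        simp [Prod.fst_add, Prod.smul_fst, Pi.add_apply, Pi.smul_apply, smul_eq_mul]
      · simp
      · simp
  unfold dX
  rw [hfun]
  set c := x A A' with hc
  set S := ∑ B : Fin 2, ∑ B' : Fin 2, k B * κ B' * x B B' with hS
  set P := Ppt k x π σ with hP
  have hexp : HasDerivAt
      (fun s : ℂ => Complex.exp (Complex.I * S + Complex.I * k A * κ A' * (s - c)))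
      (Complex.exp (Complex.I * S) * (Complex.I * k A * κ A')) c := by
    have h1 : HasDerivAt (fun s : ℂ => Complex.I * S + Complex.I * k A * κ A' * (s - c))
        (Complex.I * k A * κ A') c := by
      simpa using (((hasDerivAt_id c).sub_const c).const_mul
        (Complex.I * k A * κ A')).const_add (Complex.I * S)
    simpa using h1.cexp
  have hγ : HasDerivAt (fun s : ℂ => P + (Complex.I * σ A' * (s - c)) • Wdir A)
      ((Complex.I * σ A') • Wdir A) c := by
    have h1 : HasDerivAt (fun s : ℂ => Complex.I * σ A' * (s - c)) (Complex.I * σ A') c := by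
      simpa using ((hasDerivAt_id c).sub_const c).const_mul (Complex.I * σ A')
    simpa using (h1.smul_const (Wdir A)).const_add P
  have hphi : HasDerivAt (fun s : ℂ => φ (P + (Complex.I * σ A' * (s - c)) • Wdir A))
      (Complex.I * σ A' * fderiv ℂ φ P (Wdir A)) c := by
    have h0 : P + (Complex.I * σ A' * ((c:ℂ) - c)) • Wdir A = P := by simp
    have hF : HasFDerivAt φ (fderiv ℂ φ P) (P + (Complex.I * σ A' * (c - c)) • Wdir A) := by
      rw [h0]; exact (hφ _).hasFDerivAt
    have hcomp := hF.comp_hasDerivAt c hγ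
    simpa [smul_eq_mul, Function.comp_def] using hcomp
  have hder := (hexp.mul hphi).deriv
  simp only [Pi.mul_def] at hder
  rw [hder, sub_self, mul_zero, zero_smul, add_zero, mul_zero, add_zero]
  ring

lemma dPi_dX_Phi (k κ : Fin 2 → ℂ) (φ : Vsp → ℂ) (hφ : Differentiable ℂ φ)
    (x : Fin 2 → Fin 2 → ℂ) (π σ : Fin 2 → ℂ) :
    ∃ C : ℂ, ∃ D : Fin 2 → Fin 2 → ℂ, ∀ A A' B : Fin 2,
      dPi B (dX A A' (Phi k κ φ)) x π σ = k A * κ A' * k B * C + σ A' * D A B := by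
  set P := Ppt k x π σ with hP
  set Eexp := Complex.exp (Complex.I * ∑ B : Fin 2, ∑ B' : Fin 2, k B * κ B' * x B B') with hE
  refine ⟨Eexp * Complex.I * fderiv ℂ φ P e3,
    fun A B => Eexp * Complex.I *
      deriv (fun s => fderiv ℂ φ (P + (k B * (s - π B)) • e3) (Wdir A)) (π B), ?_⟩
  intro A A' B
  have hPpt : ∀ s : ℂ, Ppt k x (Function.update π B s) σ = P + (k B * (s - π B)) • e3 := by
    intro s
    rw [hP]
    unfold Ppt e3
    refine Prod.ext ?_ (Prod.ext ?_ ?_)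
    · funext C; simp
    · simp
    · show (∑ A : Fin 2, k A * Function.update π B s A) = _
      rw [sumk_update]
      simp [smul_eq_mul]
  have hfun : (fun s : ℂ => dX A A' (Phi k κ φ) x (Function.update π B s) σ)
      = fun s => Eexp * (Complex.I * k A * κ A' * φ (P + (k B * (s - π B)) • e3)
          + Complex.I * σ A' * fderiv ℂ φ (P + (k B * (s - π B)) • e3) (Wdir A)) := by
    funext s
    rw [dX_Phi k κ φ hφ A A' x (Function.update π B s) σ, hPpt s]
  unfold dPi
  rw [hfun]
  have hγ : HasDerivAt (fun s : ℂ => P + (k B * (s - π B)) • e3) ((k B) • e3) (π B) := by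
    have h1 : HasDerivAt (fun s : ℂ => k B * (s - π B)) (k B) (π B) := by
      simpa using ((hasDerivAt_id (π B)).sub_const (π B)).const_mul (k B)
    simpa using (h1.smul_const e3).const_add P
  have hu : HasDerivAt (fun s : ℂ => φ (P + (k B * (s - π B)) • e3))
      (k B * fderiv ℂ φ P e3) (π B) := by
    have h0 : P + (k B * ((π B) - π B)) • e3 = P := by simp
    have hF : HasFDerivAt φ (fderiv ℂ φ P) (P + (k B * ((π B) - π B)) • e3) := by
      rw [h0]; exact (hφ _).hasFDerivAt
    have hcomp := hF.comp_hasDerivAt (π B) hγ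
    simpa [smul_eq_mul, Function.comp_def] using hcomp
  have hv : DifferentiableAt ℂ
      (fun s : ℂ => fderiv ℂ φ (P + (k B * (s - π B)) • e3) (Wdir A)) (π B) := by
    have houter : Differentiable ℂ (fun t : ℂ => fderiv ℂ φ (P + t • e3) (Wdir A)) :=
      fderiv_line_differentiable φ hφ P e3 (Wdir A)
    have hinner : Differentiable ℂ (fun s : ℂ => k B * (s - π B)) :=
      (differentiable_id.sub_const (π B)).const_mul (k B)
    have := (houter (k B * (π B - π B))).comp (π B) (hinner (π B))
    simpa [Function.comp_def] using this
  have hsum : DifferentiableAt ℂ (fun s : ℂ =>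
      Complex.I * k A * κ A' * φ (P + (k B * (s - π B)) • e3)) (π B) :=
    (hu.differentiableAt).const_mul _
  have hsum2 : DifferentiableAt ℂ (fun s : ℂ =>
      Complex.I * σ A' * fderiv ℂ φ (P + (k B * (s - π B)) • e3) (Wdir A)) (π B) :=
    hv.const_mul _
  rw [deriv_const_mul_field, deriv_fun_add hsum hsum2, deriv_const_mul_field,
    deriv_const_mul_field, hu.deriv]
  ring

theorem Mprime_Phi_eq_zero (k κ : Fin 2 → ℂ)
    (φ : (Fin 2 → ℂ) × (Fin 2 → ℂ) × ℂ → ℂ) (hφ : Differentiable ℂ φ) :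
    ∀ x π σ, ∑ A : Fin 2, ∑ B : Fin 2, ∑ A' : Fin 2, ∑ B' : Fin 2,
      eps A' B' * σ B' * eps A B * dPi B (dX A A' (Phi k κ φ)) x π σ = 0 := by
  intro x π σ
  obtain ⟨C, D, hCD⟩ := dPi_dX_Phi k κ φ hφ x π σ
  simp only [Fin.sum_univ_two, hCD]
  simp only [eps]
  norm_num
  ring

end Aux
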